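/- Let p be a prime, G a nontrivial finite p-group, and let T and U be finite nonempty transitive G-sets such that there exists a G-map from T to U and #U < #T. Then for every integer s divisible by p, the product p · #Aut_G(T) divides φ_T(U) · s^{#T/#U}. (Equivalently, (φ_T(U)/φ_T(T))·s^{#T/#U} ≡ 0 mod p.) -/

import Mathlib

section Aux

variable {G T U : Type*} [Group G] [MulAction G T] [MulAction G U]

/-- Evaluation at a point is injective on equivariant maps from a transitive G-set. -/
lemma eval_inj_aux [MulAction.IsPretransitive G T] (t₀ : T) {f f' : T → U}
    (hf : ∀ (g : G) (t : T), f (g • t) = g • f t)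
    (hf' : ∀ (g : G) (t : T), f' (g • t) = g • f' t)
    (h : f t₀ = f' t₀) : f = f' := by
  funext t
  obtain ⟨g, rfl⟩ := MulAction.exists_smul_eq G t₀ t
  rw [hf, hf', h]

lemma symm_equivariant_aux {e : T ≃ T}
    (he : ∀ (g : G) (t : T), e (g • t) = g • e t) (g : G) (t : T) :
    e.symm (g • t) = g • e.symm t := by
  apply e.injective
  rw [he, e.apply_symm_apply, e.apply_symm_apply]

instance autGroupAux : Group {e : T ≃ T // ∀ (g : G) (t : T), e (g • t) = g • e t} where
  mul e f := ⟨f.1.trans e.1, fun g t => by simp [f.2, e.2]⟩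
  one := ⟨Equiv.refl T, fun _ _ => rfl⟩
  inv e := ⟨e.1.symm, symm_equivariant_aux e.2⟩
  mul_assoc a b c := Subtype.ext (Equiv.ext fun t => rfl)
  one_mul a := Subtype.ext (Equiv.ext fun t => rfl)
  mul_one a := Subtype.ext (Equiv.ext fun t => rfl)
  inv_mul_cancel a := Subtype.ext (Equiv.ext fun t => a.1.symm_apply_apply t)

@[simp] lemma aut_mul_apply_aux
    (e f : {e : T ≃ T // ∀ (g : G) (t : T), e (g • t) = g • e t}) (t : T) :
    (e * f).1 t = e.1 (f.1 t) := rfl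

@[simp] lemma aut_inv_apply_aux
    (e : {e : T ≃ T // ∀ (g : G) (t : T), e (g • t) = g • e t}) (t : T) :
    (e⁻¹).1 t = e.1.symm t := rfl

instance autActionAux : MulAction {e : T ≃ T // ∀ (g : G) (t : T), e (g • t) = g • e t}
    {f : T → U // ∀ (g : G) (t : T), f (g • t) = g • f t} where
  smul e f := ⟨fun t => f.1 (e.1.symm t), fun g t => by
    show f.1 (e.1.symm (g • t)) = g • f.1 (e.1.symm t)
    rw [symm_equivariant_aux e.2, f.2]⟩
  one_smul f := Subtype.ext (funext fun t => rfl)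
  mul_smul e e' f := Subtype.ext (funext fun t => rfl)

@[simp] lemma aut_smul_apply_aux
    (e : {e : T ≃ T // ∀ (g : G) (t : T), e (g • t) = g • e t})
    (f : {f : T → U // ∀ (g : G) (t : T), f (g • t) = g • f t}) (t : T) :
    (e • f).1 t = f.1 (e.1.symm t) := rfl

end Aux

lemma card_dvd_of_free {H X : Type*} [Group H] [Finite H] [Finite X] [MulAction H X]
    (hfree : ∀ (h : H) (x : X), h • x = x → h = 1) : Nat.card H ∣ Nat.card X := by
  classical
  cases nonempty_fintype H
  cases nonempty_fintype X
  rw [Nat.card_eq_fintype_card, Nat.card_eq_fintype_card,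
    MulAction.card_eq_sum_card_group_div_card_stabilizer H X]
  refine Finset.dvd_sum fun ω _ => ?_
  have h1 : MulAction.stabilizer H (Quotient.out ω) = ⊥ := by
    ext h
    simp only [MulAction.mem_stabilizer_iff, Subgroup.mem_bot]
    exact ⟨fun hh => hfree _ _ hh, fun hh => by simp [hh]⟩
  have h2 : Fintype.card ↥(MulAction.stabilizer H (Quotient.out ω)) = 1 := by
    rw [← Nat.card_eq_fintype_card, h1, Subgroup.card_bot]
  rw [h2, Nat.div_one]

section Fiber

variable {G T U : Type*} [Group G] [MulAction G T] [MulAction G U]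

/-- Equivariant translation between fibers of an equivariant map. -/
def fiberEquivAux {f : T → U} (hf : ∀ (g : G) (t : T), f (g • t) = g • f t)
    {u u' : U} {g : G} (hg : g • u = u') : {t : T // f t = u} ≃ {t : T // f t = u'} where
  toFun t := ⟨g • t.1, by rw [hf, t.2, hg]⟩
  invFun t := ⟨g⁻¹ • t.1, by rw [hf, t.2, ← hg]; simp⟩
  left_inv t := Subtype.ext (by simp)
  right_inv t := Subtype.ext (by simp)

lemma card_eq_mul_fiber_aux [MulAction.IsPretransitive G U] [Fintype T] [Fintype U]
    {f : T → U} (hf : ∀ (g : G) (t : T), f (g • t) = g • f t) (u : U) :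
    Fintype.card T = Fintype.card U * Nat.card {t : T // f t = u} := by
  classical
  rw [← Fintype.card_congr (Equiv.sigmaFiberEquiv f), Fintype.card_sigma]
  have h : ∀ u' : U, Fintype.card {t : T // f t = u'} = Nat.card {t : T // f t = u} := by
    intro u'
    obtain ⟨g, hg⟩ := MulAction.exists_smul_eq G u' u
    rw [← Nat.card_eq_fintype_card]
    exact Nat.card_congr (fiberEquivAux hf hg)
  rw [Finset.sum_congr rfl fun u' _ => h u']
  simp [Finset.sum_const, mul_comm]

end Fiber

section Stab

variable {G T U : Type*} [Group G] [MulAction G T] [MulAction G U]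

lemma stab_card_dvd_fiber_aux [MulAction.IsPretransitive G T] [Finite T] [Finite U] (t₀ : T)
    (f : {f : T → U // ∀ (g : G) (t : T), f (g • t) = g • f t}) :
    Nat.card (MulAction.stabilizer {e : T ≃ T // ∀ (g : G) (t : T), e (g • t) = g • e t} f) ∣
      Nat.card {t : T // f.1 t = f.1 t₀} := by
  classical
  set A := {e : T ≃ T // ∀ (g : G) (t : T), e (g • t) = g • e t}
  set S := MulAction.stabilizer A f
  have hfix : ∀ e : A, e ∈ S → ∀ t : T, f.1 (e.1 t) = f.1 t := by
    intro e he t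
    have h1 : (e • f).1 (e.1 t) = f.1 (e.1 t) := by rw [he]
    have h2 : (e • f).1 (e.1 t) = f.1 t := by
      rw [aut_smul_apply_aux, Equiv.symm_apply_apply]
    rw [← h1, h2]
  letI : SMul S {t : T // f.1 t = f.1 t₀} :=
    ⟨fun e x => ⟨e.1.1 x.1, by rw [hfix e.1 e.2, x.2]⟩⟩
  letI : MulAction S {t : T // f.1 t = f.1 t₀} :=
    { one_smul := fun x => Subtype.ext rfl
      mul_smul := fun a b x => Subtype.ext rfl }
  refine card_dvd_of_free fun e x hx => ?_
  have hx' : (e.1.1 : T → T) x.1 = id x.1 := congrArg Subtype.val hx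
  have hid : (e.1.1 : T → T) = (id : T → T) :=
    eval_inj_aux (G := G) x.1 e.1.2 (fun _ _ => rfl) hx'
  exact Subtype.ext (Subtype.ext (Equiv.ext fun t => congrFun hid t))

end Stab

/-- Let p be a prime, G a nontrivial finite p-group, and T, U finite nonempty transitive
G-sets such that a G-map T → U exists and #U < #T. Then for every integer s divisible
by p, p · #Aut_G(T) divides φ_T(U) · s^(#T/#U) in ℤ. -/
theorem prime_mul_card_aut_dvd_card_maps_mul_pow
    {p : ℕ} (hp : p.Prime) {G T U : Type*} [Group G] [Finite G] [Nontrivial G]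
    (hG : IsPGroup p G)
    [MulAction G T] [MulAction G U]
    [Fintype T] [Fintype U] [Nonempty T] [Nonempty U]
    [MulAction.IsPretransitive G T] [MulAction.IsPretransitive G U]
    (hex : ∃ f : T → U, ∀ (g : G) (t : T), f (g • t) = g • f t)
    (hlt : Fintype.card U < Fintype.card T) :
    ∀ s : ℤ, (p : ℤ) ∣ s →
      (p : ℤ) * (Nat.card {e : T ≃ T // ∀ (g : G) (t : T), e (g • t) = g • e t} : ℤ) ∣
        (Nat.card {f : T → U // ∀ (g : G) (t : T), f (g • t) = g • f t} : ℤ) *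
          s ^ (Fintype.card T / Fintype.card U) := by
  classical
  intro s hs
  haveI := Fact.mk hp
  cases nonempty_fintype G
  obtain ⟨t₀⟩ := (inferInstance : Nonempty T)
  obtain ⟨f₀, hf₀⟩ := hex
  set A := {e : T ≃ T // ∀ (g : G) (t : T), e (g • t) = g • e t} with hA
  set M := {f : T → U // ∀ (g : G) (t : T), f (g • t) = g • f t} with hM
  have hUpos : 0 < Fintype.card U := Fintype.card_pos
  -- `c` : common cardinality of the fibers
  set c := Nat.card {t : T // f₀ t = f₀ t₀} with hc
  have hTc : Fintype.card T = Fintype.card U * c := card_eq_mul_fiber_aux hf₀ (f₀ t₀)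
  have hm : Fintype.card T / Fintype.card U = c := by
    rw [hTc, Nat.mul_div_cancel_left _ hUpos]
  -- `card T` is a power of p
  obtain ⟨n, hn⟩ : ∃ n, Fintype.card G = p ^ n := by
    obtain ⟨n, hn⟩ := IsPGroup.iff_card.mp hG
    exact ⟨n, by rw [← Nat.card_eq_fintype_card]; exact hn⟩
  have hTG : Fintype.card T ∣ Fintype.card G := by
    have horb : (MulAction.orbit G t₀ : Set T) = Set.univ := MulAction.orbit_eq_univ G t₀
    have e1 : MulAction.orbit G t₀ ≃ T := (Equiv.setCongr horb).trans (Equiv.Set.univ T)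
    have h2 := MulAction.card_orbit_mul_card_stabilizer_eq_card_group G t₀
    rw [Fintype.card_congr e1] at h2
    exact ⟨_, h2.symm⟩
  obtain ⟨a, -, hTa⟩ := (Nat.dvd_prime_pow hp).mp (hn ▸ hTG)
  -- `c` is a power of p, at least p
  obtain ⟨k, hka, hck⟩ : ∃ k, k ≤ a ∧ c = p ^ k :=
    (Nat.dvd_prime_pow hp).mp (by rw [← hTa]; exact Dvd.intro_left _ hTc.symm)
  have hk1 : 1 ≤ k := by
    rcases Nat.eq_zero_or_pos k with hk0 | hk0
    · exfalso
      rw [hk0, pow_zero] at hck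
      rw [hTc, hck, mul_one] at hlt
      exact lt_irrefl _ hlt
    · exact hk0
  have hkc : k + 1 ≤ c := by
    rw [hck]
    exact (Nat.lt_pow_self hp.one_lt : k < p ^ k)
  -- all fibers of all equivariant maps have cardinality c
  have hfib : ∀ f : M, Nat.card {t : T // f.1 t = f.1 t₀} = c := by
    intro f
    have h1 : Fintype.card T = Fintype.card U * Nat.card {t : T // f.1 t = f.1 t₀} :=
      card_eq_mul_fiber_aux f.2 (f.1 t₀)
    have := h1.symm.trans hTc
    exact Nat.eq_of_mul_eq_mul_left hUpos this
  -- main counting argument in ℕ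
  have key : p * Fintype.card A ∣ Fintype.card M * p ^ c := by
    rw [MulAction.card_eq_sum_card_group_div_card_stabilizer A M, Finset.sum_mul]
    refine Finset.dvd_sum fun ω _ => ?_
    set f := Quotient.out ω with hfdef
    set S := MulAction.stabilizer A f with hS
    have hd1 : Nat.card ↥S ∣ c := by
      have h1 := stab_card_dvd_fiber_aux t₀ f
      rw [hfib f] at h1
      exact h1
    obtain ⟨j, hjk, hdj⟩ : ∃ j, j ≤ k ∧ Nat.card ↥S = p ^ j :=
      (Nat.dvd_prime_pow hp).mp (by rw [← hck]; exact hd1)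
    have hps : p * Nat.card ↥S ∣ p ^ c := by
      rw [hdj, ← pow_succ']
      exact pow_dvd_pow p (by omega)
    obtain ⟨k', hk'⟩ := hps
    have hSA : Nat.card ↥S ∣ Fintype.card A := by
      rw [← Nat.card_eq_fintype_card]
      exact Subgroup.card_subgroup_dvd_card S
    refine ⟨k', ?_⟩
    rw [Nat.card_eq_fintype_card] at hk' hSA hdj
    rw [hk']
    rw [show p * Fintype.card ↥S * k' = Fintype.card ↥S * (p * k') by ring,
      ← mul_assoc, Nat.div_mul_cancel hSA]
    ring
  -- conclude in ℤ
  rw [hm]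
  obtain ⟨t', rfl⟩ := hs
  have hcast : ((p : ℤ) * (Nat.card A : ℤ)) ∣ ((Nat.card M : ℤ) * (p : ℤ) ^ c) := by
    have := Int.natCast_dvd_natCast.mpr key
    push_cast at this
    rw [Nat.card_eq_fintype_card, Nat.card_eq_fintype_card]
    convert this using 2
  calc ((p : ℤ) * (Nat.card A : ℤ)) ∣ (Nat.card M : ℤ) * (p : ℤ) ^ c := hcast
    _ ∣ (Nat.card M : ℤ) * ((p : ℤ) * t') ^ c := by
        rw [mul_pow, ← mul_assoc]
        exact Dvd.intro _ rfl
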